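/- Assume g(A N, ξ) = 0, set β := g(A ξ, ξ), let α ∈ ℝ, and let S : T → T be a g-symmetric real-linear map with Sξ = αξ, where T := {Y ∈ V : g(Y,N) = 0}, η(Y) := g(Y,ξ), φ(X) := J X - g(J X,N)N, B(X) := A X - g(A X,N)N. Define R̄_N, R_ξ : T → T by R̄_N Y := Y + 3η(Y)ξ + g(A N,N)·B Y + g(A N,Y)·φ(Aξ) - g(Aξ,Y)·Aξ and R_ξ Y := Y - η(Y)ξ + β·B Y - g(Aξ,Y)·Aξ - g(φ(Aξ),Y)·φ(Aξ) + α·S Y - α²η(Y)ξ. Then R_ξ(ξ) = 0, R̄_N(ξ) = 4ξ - 2β·Aξ, and (R̄_N∘R_ξ - R_ξ∘R̄_N)(ξ) = 2αβ·(S(Aξ) - αβ·ξ). In particular, if R̄_N and R_ξ commute, then either αβ = 0 or S(Aξ) = αβ·ξ. -/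

import Mathlib

noncomputable section

variable {V : Type*}


/-- The real inner product `g(x,y) = Re⟨x,y⟩` induced by the Hermitian inner product. -/
def g [NormedAddCommGroup V] [InnerProductSpace ℂ V] (x y : V) : ℝ := (inner ℂ x y : ℂ).re

/-- The tangential part of `J X` on the hypersurface tangent space. -/
def phi [NormedAddCommGroup V] [InnerProductSpace ℂ V] (N X : V) : V :=
  Complex.I • X - g (Complex.I • X) N • N

/-- The tangential part of `A X` on the hypersurface tangent space. -/
def B [NormedAddCommGroup V] [InnerProductSpace ℂ V] (A : V →ₗ[ℝ] V) (N X : V) : V :=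
  A X - g (A X) N • N

/-- The normal Jacobi operator of a Hopf hypersurface in the quadric:
`R̄_N Y = Y + 3η(Y)ξ + g(AN,N)·BY + g(AN,Y)·φ(Aξ) - g(Aξ,Y)·Aξ`. -/
def RNop [NormedAddCommGroup V] [InnerProductSpace ℂ V]
    (A : V →ₗ[ℝ] V) (N ξ Y : V) : V :=
  Y + (3 * g Y ξ) • ξ + g (A N) N • B A N Y + g (A N) Y • phi N (A ξ)
    - g (A ξ) Y • A ξ

/-- The structure Jacobi operator of a Hopf hypersurface in the quadric:
`R_ξ Y = Y - η(Y)ξ + β·BY - g(Aξ,Y)·Aξ - g(φ(Aξ),Y)·φ(Aξ) + α·SY - α²η(Y)ξ`. -/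
def Rxiop [NormedAddCommGroup V] [InnerProductSpace ℂ V]
    (A S : V →ₗ[ℝ] V) (α : ℝ) (N ξ Y : V) : V :=
  Y - g Y ξ • ξ + g (A ξ) ξ • B A N Y - g (A ξ) Y • A ξ
    - g (phi N (A ξ)) Y • phi N (A ξ) + α • S Y - (α ^ 2 * g Y ξ) • ξ

section helpers
variable [NormedAddCommGroup V] [InnerProductSpace ℂ V]

lemma g_symm (x y : V) : g x y = g y x := by
  unfold g; rw [← inner_conj_symm x y]; exact (Complex.conj_re _)

lemma g_add_left (x y z : V) : g (x + y) z = g x z + g y z := by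
  simp [g, inner_add_left]
lemma g_add_right (x y z : V) : g x (y + z) = g x y + g x z := by
  simp [g, inner_add_right]
lemma g_smul_left (r : ℝ) (x y : V) : g (r • x) y = r * g x y := by
  rw [show r • x = (r:ℂ) • x from ((algebraMap_smul ℂ r x).symm.trans (by norm_num))]
  rw [g, g, inner_smul_left]; simp [Complex.mul_re]
lemma g_smul_right (r : ℝ) (x y : V) : g x (r • y) = r * g x y := by
  rw [show r • y = (r:ℂ) • y from ((algebraMap_smul ℂ r y).symm.trans (by norm_num))]
  rw [g, g, inner_smul_right]; simp [Complex.mul_re]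
lemma g_neg_left (x y : V) : g (-x) y = - g x y := by simp [g, inner_neg_left]
lemma g_neg_right (x y : V) : g x (-y) = - g x y := by simp [g, inner_neg_right]
lemma g_sub_left (x y z : V) : g (x - y) z = g x z - g y z := by simp [g, inner_sub_left]
lemma g_sub_right (x y z : V) : g x (y - z) = g x y - g x z := by simp [g, inner_sub_right]
lemma g_zero_left (x : V) : g 0 x = 0 := by simp [g]
lemma g_zero_right (x : V) : g x 0 = 0 := by simp [g]
lemma g_self (x : V) : g x x = ‖x‖ ^ 2 := by
  rw [g, ← inner_self_eq_norm_sq (𝕜 := ℂ) x]; rfl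

end helpers

/-- With `g(AN,ξ) = 0`, `β = g(Aξ,ξ)` and a Hopf shape operator `S` (g-symmetric,
`Sξ = αξ`), one has `R_ξ(ξ) = 0`, `R̄_N(ξ) = 4ξ - 2β·Aξ`, and
`(R̄_N∘R_ξ - R_ξ∘R̄_N)(ξ) = 2αβ·(S(Aξ) - αβ·ξ)`; in particular, if `R̄_N` and `R_ξ`
commute on `T`, then `αβ = 0` or `S(Aξ) = αβ·ξ`. -/
theorem stmt_10 [NormedAddCommGroup V] [InnerProductSpace ℂ V]
    (A : V →ₗ[ℝ] V)
    (hA_invol : ∀ x, A (A x) = x)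
    (hA_antiJ : ∀ x, A (Complex.I • x) = -(Complex.I • A x))
    (hA_herm : ∀ x y, (inner ℂ (A x) (A y) : ℂ) = inner ℂ y x)
    (N : V) (hN : ‖N‖ = 1)
    (ξ : V) (hξ : ξ = -(Complex.I • N))
    (hANξ : g (A N) ξ = 0)
    (β : ℝ) (hβ : β = g (A ξ) ξ)
    (α : ℝ) (S : V →ₗ[ℝ] V)
    (hS_tan : ∀ Y : V, g Y N = 0 → g (S Y) N = 0)
    (hS_sym : ∀ X Y : V, g X N = 0 → g Y N = 0 → g (S X) Y = g X (S Y))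
    (hSξ : S ξ = α • ξ) :
    Rxiop A S α N ξ ξ = 0 ∧
    RNop A N ξ ξ = (4 : ℝ) • ξ - (2 * β) • A ξ ∧
    RNop A N ξ (Rxiop A S α N ξ ξ) - Rxiop A S α N ξ (RNop A N ξ ξ)
      = (2 * α * β) • (S (A ξ) - (α * β) • ξ) ∧
    ((∀ Y : V, g Y N = 0 →
        RNop A N ξ (Rxiop A S α N ξ Y) = Rxiop A S α N ξ (RNop A N ξ Y)) →
      α * β = 0 ∨ S (A ξ) = (α * β) • ξ) := by

  -- basic vector identities
  have hIξ : Complex.I • ξ = N := by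
    rw [hξ, smul_neg, smul_smul, Complex.I_mul_I, neg_smul, one_smul, neg_neg]
  have hAξI : A ξ = Complex.I • A N := by
    rw [hξ, map_neg, hA_antiJ, neg_neg]
  have hIAξ : Complex.I • A ξ = -(A N) := by
    have h := hA_antiJ ξ
    rw [hIξ] at h
    rw [h, neg_neg]
  have hAAξ : A (A ξ) = ξ := hA_invol ξ
  have gA : ∀ x y : V, g (A x) y = g x (A y) := by
    intro x y
    have h := hA_herm x (A y)
    rw [hA_invol] at h
    calc g (A x) y = g (A y) x := by rw [g, g, h]
      _ = g x (A y) := g_symm _ _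
  -- scalar identities
  have s1 : g N N = 1 := by rw [g_self, hN]; norm_num
  have hnξ : ‖ξ‖ = 1 := by
    rw [hξ, norm_neg, norm_smul, hN]; simp
  have s4 : g ξ ξ = 1 := by rw [g_self, hnξ]; norm_num
  have s2 : g ξ N = 0 := by
    rw [hξ, g_neg_left]
    have : g (Complex.I • N) N = 0 := by
      rw [g, inner_smul_left, Complex.mul_re]
      have him : (inner ℂ N N : ℂ).im = 0 := inner_self_im (𝕜 := ℂ) N
      simp [him, hN]
    rw [this]; ring
  have s3 : g N ξ = 0 := by rw [g_symm]; exact s2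
  have s5 : g (A ξ) N = 0 := by
    rw [gA ξ N, g_symm]; exact hANξ
  have s7 : g (A ξ) ξ = β := hβ.symm
  have s6 : g (A N) N = -β := by
    have h : g (A ξ) ξ = - g (A N) N := by
      rw [hAξI, hξ, g_neg_right, g, g, inner_smul_left, inner_smul_right]
      simp [Complex.mul_re, Complex.mul_im]
    rw [← s7, h, neg_neg]
  have s8 : g (A ξ) (A ξ) = 1 := by rw [g, hA_herm ξ ξ]; exact s4
  have s9 : g (A N) (A ξ) = 0 := by rw [g, hA_herm N ξ]; exact s2
  have s10 : g N (A ξ) = 0 := by rw [g_symm]; exact s5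
  -- phi and B
  have hphi : phi N (A ξ) = -(A N) - β • N := by
    rw [phi, hIAξ, g_neg_left, s6, neg_neg]
  have s12 : g (phi N (A ξ)) ξ = 0 := by
    rw [hphi, g_sub_left, g_neg_left, g_smul_left, hANξ, s3]; ring
  have s13 : g (phi N (A ξ)) (A ξ) = 0 := by
    rw [hphi, g_sub_left, g_neg_left, g_smul_left, s9, s10]; ring
  have hBξ : B A N ξ = A ξ := by rw [B, s5, zero_smul, sub_zero]
  have hBAξ : B A N (A ξ) = ξ := by rw [B, hAAξ, s2, zero_smul, sub_zero]
  -- claim 1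
  have h1 : Rxiop A S α N ξ ξ = 0 := by
    rw [Rxiop, hBξ, hSξ, s4, s7, s12]
    module
  -- claim 2
  have h2 : RNop A N ξ ξ = (4 : ℝ) • ξ - (2 * β) • A ξ := by
    rw [RNop, hBξ, s4, s6, hANξ, s7]
    module
  -- claim 3
  have hRN0 : RNop A N ξ (0 : V) = 0 := by
    rw [RNop, B]
    simp [g_zero_left, g_zero_right]
  have h3 : RNop A N ξ (Rxiop A S α N ξ ξ) - Rxiop A S α N ξ (RNop A N ξ ξ)
      = (2 * α * β) • (S (A ξ) - (α * β) • ξ) := by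
    rw [h1, hRN0, h2, Rxiop, B]
    simp only [map_sub, map_smul, hAAξ, hSξ, g_sub_left, g_sub_right, g_smul_left,
      g_smul_right, s2, s4, s5, s7, s8, s12, s13]
    module
  refine ⟨h1, h2, h3, ?_⟩
  intro hcomm
  have hc := hcomm ξ s2
  have h0 : (2 * α * β) • (S (A ξ) - (α * β) • ξ) = 0 := by
    rw [← h3, hc, sub_self]
  rcases smul_eq_zero.mp h0 with h | h
  · left; linarith [h]
  · right; rwa [sub_eq_zero] at h
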